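/- Let s₁ = (−quv+pu+pv+q)(puv+qu+qv−p)/q², s₂ = (u²+1)(qv−p)(pv+q)/q², s₃ = mn(u²+1)(v²+1)(p²+q²)/(q²(m²+n²)), s₄ = (u²+1)(v²+1)(mq+np)(mp−nq)/(q²(m²+n²)), s₅ = (v²+1)(qu−p)(pu+q)/q², and d = (p²+q²)(v²+1)(mu−n)(nu+m)/((m²+n²)q²), and R = (u²+1)(v²+1)(p²+q²)/(4q²). Then the triangle with sides d, s₄, s₅ has circumradius R, i.e., (d·s₄·s₅)² = R²·(d+s₄+s₅)(d+s₄−s₅)(s₄+s₅−d)(s₅+d−s₄). -/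

import Mathlib

set_option maxHeartbeats 4000000

private lemma scale_lemma (A B C E k : ℚ)
    (h : (A * B * C)^2 =
      E^2 * ((A + B + C) * (A + B - C) * (B + C - A) * (C + A - B))) :
    (A*k * (B*k) * (C*k))^2 =
      (E*k)^2 * ((A*k + B*k + C*k) * (A*k + B*k - C*k) *
        (B*k + C*k - A*k) * (C*k + A*k - B*k)) := by
  linear_combination k^6 * h

private lemma poly_id (m n p q u : ℚ) :
    ((4*(p^2+q^2)*(m*u-n)*(n*u+m)) * (4*(u^2+1)*(m*q+n*p)*(m*p-n*q)) *
      (4*(m^2+n^2)*(q*u-p)*(p*u+q)))^2 =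
    ((m^2+n^2)*(u^2+1)*(p^2+q^2))^2 *
      (((4*(p^2+q^2)*(m*u-n)*(n*u+m)) + (4*(u^2+1)*(m*q+n*p)*(m*p-n*q)) + (4*(m^2+n^2)*(q*u-p)*(p*u+q))) *
       ((4*(p^2+q^2)*(m*u-n)*(n*u+m)) + (4*(u^2+1)*(m*q+n*p)*(m*p-n*q)) - (4*(m^2+n^2)*(q*u-p)*(p*u+q))) *
       ((4*(u^2+1)*(m*q+n*p)*(m*p-n*q)) + (4*(m^2+n^2)*(q*u-p)*(p*u+q)) - (4*(p^2+q^2)*(m*u-n)*(n*u+m))) *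
       ((4*(m^2+n^2)*(q*u-p)*(p*u+q)) + (4*(p^2+q^2)*(m*u-n)*(n*u+m)) - (4*(u^2+1)*(m*q+n*p)*(m*p-n*q)))) := by
  ring

theorem pentagon_diagonal_AD_triangle (m n p q u v s4 s5 d R : ℚ)
    (hq : q ≠ 0) (hmn : m^2 + n^2 ≠ 0)
    (hs4 : s4 = (u^2 + 1) * (v^2 + 1) * (m * q + n * p) * (m * p - n * q) /
      (q^2 * (m^2 + n^2)))
    (hs5 : s5 = (v^2 + 1) * (q * u - p) * (p * u + q) / q^2)
    (hd : d = (p^2 + q^2) * (v^2 + 1) * (m * u - n) * (n * u + m) /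
      ((m^2 + n^2) * q^2))
    (hR : R = (u^2 + 1) * (v^2 + 1) * (p^2 + q^2) / (4 * q^2)) :
    (d * s4 * s5)^2 =
      R^2 * ((d + s4 + s5) * (d + s4 - s5) * (s4 + s5 - d) * (s5 + d - s4)) := by
  set k : ℚ := (v^2+1) / (4 * q^2 * (m^2+n^2)) with hk
  have ht : (4 * q^2 * (m^2+n^2)) ≠ 0 := by
    apply mul_ne_zero _ hmn
    positivity
  have h4 : s4 = (4*(u^2+1)*(m*q+n*p)*(m*p-n*q)) * k := by
    rw [hs4, hk]; field_simp
  have h5 : s5 = (4*(m^2+n^2)*(q*u-p)*(p*u+q)) * k := by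
    rw [hs5, hk]; field_simp
  have hdd : d = (4*(p^2+q^2)*(m*u-n)*(n*u+m)) * k := by
    rw [hd, hk]; field_simp
  have hRR : R = ((m^2+n^2)*(u^2+1)*(p^2+q^2)) * k := by
    rw [hR, hk]; field_simp
  rw [h4, h5, hdd, hRR]
  exact scale_lemma _ _ _ _ _ (poly_id m n p q u)
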